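/- Let h : ℝ^M → ℝ be C² and Q symmetric positive semidefinite. Suppose x* ∈ N(Q) satisfies: ∇h(x*) is orthogonal to N(Q) (so x* is a critical point of h restricted to N(Q)) and the restricted Hessian of h on N(Q) at x* is nonsingular. Then there exist β₀ > 0 and a C¹ curve g : (β₀, ∞) → ℝ^M such that ∇h(g(β)) + β Q g(β) = 0 for all β > β₀ and g(β) → x* as β → ∞. -/

import Mathlib

set_option maxHeartbeats 1000000
open Matrix Filter

/-- Implicit-function-theorem step: if x* is a nondegenerate critical point of h restricted
to N(Q), then for large β there is a C¹ curve g(β) of critical points of h(x) + β xᵀQx with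
g(β) → x*. -/
theorem penalized_critical_curve (M : ℕ)
    (h : EuclideanSpace ℝ (Fin M) → ℝ) (hh : ContDiff ℝ 2 h)
    (Q : Matrix (Fin M) (Fin M) ℝ) (hQsymm : Q.IsSymm) (hQpsd : Q.PosSemidef)
    (xstar : EuclideanSpace ℝ (Fin M))
    (hker : Matrix.toEuclideanLin Q xstar = 0)
    (horth : ∀ w : EuclideanSpace ℝ (Fin M), Matrix.toEuclideanLin Q w = 0 →
      inner ℝ (gradient h xstar) w = (0 : ℝ))
    (hnondeg : ∀ v : EuclideanSpace ℝ (Fin M), Matrix.toEuclideanLin Q v = 0 →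
      (Submodule.orthogonalProjectionOnto (LinearMap.ker (Matrix.toEuclideanLin Q))
        (fderiv ℝ (gradient h) xstar v) : EuclideanSpace ℝ (Fin M)) = 0 → v = 0) :
    ∃ beta0 : ℝ, 0 < beta0 ∧ ∃ g : ℝ → EuclideanSpace ℝ (Fin M),
      ContDiffOn ℝ 1 g (Set.Ioi beta0) ∧
      (∀ beta > beta0, gradient h (g beta) + beta • Matrix.toEuclideanLin Q (g beta) = 0) ∧
      Tendsto g atTop (nhds xstar) := by
  classical
  set T : EuclideanSpace ℝ (Fin M) →ₗ[ℝ] EuclideanSpace ℝ (Fin M) := Matrix.toEuclideanLin Q with hT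
  set K : Submodule ℝ (EuclideanSpace ℝ (Fin M)) := LinearMap.ker T with hK
  set P : EuclideanSpace ℝ (Fin M) →L[ℝ] EuclideanSpace ℝ (Fin M) :=
    K.subtypeL.comp (K.orthogonalProjectionOnto) with hP
  set Qc : EuclideanSpace ℝ (Fin M) →L[ℝ] EuclideanSpace ℝ (Fin M) :=
    LinearMap.toContinuousLinearMap T with hQc
  have hgc : ContDiff ℝ 1 (gradient h) := by
    have h1 : ContDiff ℝ 1 (fderiv ℝ h) := hh.fderiv_right (by norm_num)
    exact (InnerProductSpace.toDual ℝ _).symm.toContinuousLinearEquiv.contDiff.comp h1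
  set H : EuclideanSpace ℝ (Fin M) →L[ℝ] EuclideanSpace ℝ (Fin M) :=
    fderiv ℝ (gradient h) xstar with hHdef
  have hH : HasFDerivAt (gradient h) H xstar :=
    ((hgc.differentiable one_ne_zero) xstar).hasFDerivAt
  have hsa : ∀ x y : EuclideanSpace ℝ (Fin M), inner ℝ (T x) y = (inner ℝ x (T y) : ℝ) :=
    Matrix.isHermitian_iff_isSymmetric.1 hQpsd.1
  have hQKperp : ∀ x, Qc x ∈ Kᗮ := by
    intro x
    rw [Submodule.mem_orthogonal]
    intro u hu
    have h0 : T u = 0 := hu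
    have hQT : Qc x = T x := rfl
    rw [hQT]
    calc inner ℝ u (T x) = (inner ℝ (T u) x : ℝ) := (hsa u x).symm
      _ = 0 := by rw [h0]; simp
  have hgrad_perp : gradient h xstar ∈ Kᗮ := by
    rw [Submodule.mem_orthogonal]
    intro u hu
    rw [real_inner_comm]
    exact horth u hu
  have hsplit : ∀ a b : EuclideanSpace ℝ (Fin M), a ∈ K → b ∈ Kᗮ → a + b = 0 →
      a = 0 ∧ b = 0 := by
    intro a b ha hb hab
    have ha' : a = -b := by linear_combination (norm := module) hab
    have h1 : a = 0 := by
      have : a ∈ K ⊓ Kᗮ := Submodule.mem_inf.2 ⟨ha, ha' ▸ neg_mem hb⟩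
      rw [K.orthogonal_disjoint.eq_bot] at this
      exact (Submodule.mem_bot ℝ).1 this
    exact ⟨h1, by linear_combination (norm := module) hab - h1⟩
  -- the map G
  set w : EuclideanSpace ℝ (Fin M) := gradient h xstar - P (gradient h xstar) with hw
  set Φ : ℝ × EuclideanSpace ℝ (Fin M) → EuclideanSpace ℝ (Fin M) := fun p =>
    P (gradient h p.2) + p.1 • (gradient h p.2 - P (gradient h p.2)) + Qc p.2 with hΦ
  set G : ℝ × EuclideanSpace ℝ (Fin M) → ℝ × EuclideanSpace ℝ (Fin M) :=
    fun p => (p.1, Φ p) with hGdef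
  have hGc : ContDiff ℝ 1 G := by
    refine ContDiff.prodMk contDiff_fst (ContDiff.add (ContDiff.add ?_ ?_) ?_)
    · exact (P.contDiff).comp (hgc.comp contDiff_snd)
    · exact contDiff_fst.smul ((hgc.comp contDiff_snd).sub ((P.contDiff).comp (hgc.comp contDiff_snd)))
    · exact (Qc.contDiff).comp contDiff_snd
  set fstL : ℝ × EuclideanSpace ℝ (Fin M) →L[ℝ] ℝ := ContinuousLinearMap.fst ℝ ℝ _ with hfstL
  set sndL : ℝ × EuclideanSpace ℝ (Fin M) →L[ℝ] EuclideanSpace ℝ (Fin M) :=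
    ContinuousLinearMap.snd ℝ ℝ _ with hsndL
  set D : ℝ × EuclideanSpace ℝ (Fin M) →L[ℝ] ℝ × EuclideanSpace ℝ (Fin M) :=
    fstL.prod (P.comp (H.comp sndL) + fstL.smulRight w + Qc.comp sndL) with hD
  have hDzero : ∀ r, D r = 0 → r = 0 := by
    intro r h0
    have h1 : r.1 = 0 := congrArg Prod.fst h0
    have h2 : P (H r.2) + r.1 • w + Qc r.2 = 0 := congrArg Prod.snd h0
    rw [h1, zero_smul, add_zero] at h2
    obtain ⟨hPH, hQr⟩ := hsplit _ _ (K.orthogonalProjectionOnto (H r.2)).2 (hQKperp r.2) h2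
    have hrK : T r.2 = 0 := hQr
    have hproj : (K.orthogonalProjectionOnto (H r.2) : EuclideanSpace ℝ (Fin M)) = 0 := hPH
    exact Prod.ext h1 (hnondeg r.2 hrK hproj)
  have hDbij : Function.Bijective D := by
    have hinj : Function.Injective D := by
      intro p q hpq
      have h0 : D (p - q) = 0 := by rw [map_sub, hpq, sub_self]
      exact sub_eq_zero.1 (hDzero _ h0)
    exact ⟨hinj, (LinearMap.injective_iff_surjective (f := D.toLinearMap)).1 hinj⟩
  set Deq : (ℝ × EuclideanSpace ℝ (Fin M)) ≃L[ℝ] (ℝ × EuclideanSpace ℝ (Fin M)) :=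
    (LinearEquiv.ofBijective D.toLinearMap hDbij).toContinuousLinearEquiv with hDeq
  have hDeqD : (Deq : (ℝ × EuclideanSpace ℝ (Fin M)) →L[ℝ] (ℝ × EuclideanSpace ℝ (Fin M))) = D := by
    exact ContinuousLinearMap.ext fun p => rfl
  -- derivative of G at (0, xstar)
  have ha2 : HasFDerivAt (fun p : ℝ × EuclideanSpace ℝ (Fin M) => gradient h p.2)
      (H.comp sndL) (0, xstar) := by
    have := hH.comp ((0, xstar) : ℝ × EuclideanSpace ℝ (Fin M))
      (hasFDerivAt_snd : HasFDerivAt Prod.snd sndL ((0, xstar) : ℝ × EuclideanSpace ℝ (Fin M)))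
    exact this
  have hA : HasFDerivAt (fun p : ℝ × EuclideanSpace ℝ (Fin M) => P (gradient h p.2))
      (P.comp (H.comp sndL)) (0, xstar) := P.hasFDerivAt.comp _ ha2
  have hB0 : HasFDerivAt (fun p : ℝ × EuclideanSpace ℝ (Fin M) =>
      gradient h p.2 - P (gradient h p.2)) (H.comp sndL - P.comp (H.comp sndL)) (0, xstar) :=
    ha2.sub hA
  have hB : HasFDerivAt (fun p : ℝ × EuclideanSpace ℝ (Fin M) =>
      p.1 • (gradient h p.2 - P (gradient h p.2)))
      (((0, xstar) : ℝ × EuclideanSpace ℝ (Fin M)).1 • (H.comp sndL - P.comp (H.comp sndL))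
        + fstL.smulRight w) (0, xstar) :=
    HasFDerivAt.smul (𝕜 := ℝ) (𝕜' := ℝ) (hasFDerivAt_fst :
      HasFDerivAt (Prod.fst : ℝ × EuclideanSpace ℝ (Fin M) → ℝ) fstL (0, xstar)) hB0
  have hC : HasFDerivAt (fun p : ℝ × EuclideanSpace ℝ (Fin M) => Qc p.2)
      (Qc.comp sndL) (0, xstar) := Qc.hasFDerivAt.comp _
      (hasFDerivAt_snd : HasFDerivAt Prod.snd sndL ((0, xstar) : ℝ × EuclideanSpace ℝ (Fin M)))
  have hGd : HasFDerivAt G (Deq : (ℝ × EuclideanSpace ℝ (Fin M)) →L[ℝ] (ℝ × EuclideanSpace ℝ (Fin M))) (0, xstar) := by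
    have h5 := HasFDerivAt.prodMk (hasFDerivAt_fst (p := ((0, xstar) : ℝ × EuclideanSpace ℝ (Fin M))))
      ((hA.add hB).add hC)
    have heq : fstL.prod (P.comp (H.comp sndL) +
        (((0, xstar) : ℝ × EuclideanSpace ℝ (Fin M)).1 •
          (H.comp sndL - P.comp (H.comp sndL)) + fstL.smulRight w) + Qc.comp sndL) = D := by
      rw [hD]
      congr 1
      module
    rw [hDeqD]
    exact heq ▸ h5
  have hGca : ContDiffAt ℝ 1 G (0, xstar) := hGc.contDiffAt
  set Fi : ℝ × EuclideanSpace ℝ (Fin M) → ℝ × EuclideanSpace ℝ (Fin M) :=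
    hGca.localInverse (f' := Deq) hGd one_ne_zero with hFi
  have hFic : ContDiffAt ℝ 1 Fi (G (0, xstar)) := hGca.to_localInverse hGd one_ne_zero
  have hFia : Fi (G (0, xstar)) = (0, xstar) := hGca.localInverse_apply_image hGd one_ne_zero
  have hstrict : HasStrictFDerivAt G (↑Deq) (0, xstar) := hGca.hasStrictFDerivAt' hGd one_ne_zero
  have hright : ∀ᶠ y in nhds (G (0, xstar)), G (Fi y) = y := hstrict.eventually_right_inverse
  -- G (0, xstar) = (0, 0)
  have hPg : P (gradient h xstar) = 0 := by
    have h1 : (K.orthogonalProjectionOnto) (gradient h xstar) = 0 :=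
      Submodule.orthogonalProjectionOnto_apply_of_mem_orthogonal hgrad_perp
    show K.subtypeL ((K.orthogonalProjectionOnto) (gradient h xstar)) = 0
    rw [h1]; rfl
  have hQx : Qc xstar = 0 := hker
  have hGa : G (0, xstar) = (0, 0) := by
    show ((0 : ℝ), Φ (0, xstar)) = (0, 0)
    rw [Prod.mk.injEq]
    refine ⟨rfl, ?_⟩
    show P (gradient h xstar) + (0 : ℝ) • _ + Qc xstar = 0
    rw [hPg, hQx, zero_smul]; simp
  rw [hGa] at hFic hFia hright
  -- the curve near 0
  have hmap : Tendsto (fun t : ℝ => ((t, 0) : ℝ × EuclideanSpace ℝ (Fin M)))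
      (nhds 0) (nhds (0, 0)) := (continuous_id.prodMk continuous_const).tendsto' 0 (0, 0) rfl
  have hev : ∀ᶠ t in nhds (0 : ℝ), G (Fi (t, 0)) = (t, 0) := hmap.eventually hright
  have hφc : ContDiffAt ℝ 1 (fun t : ℝ => (Fi (t, 0)).2) 0 := by
    have h2 : ContDiffAt ℝ 1 (fun t : ℝ => ((t, 0) : ℝ × EuclideanSpace ℝ (Fin M))) 0 :=
      ((contDiff_id.prodMk contDiff_const)).contDiffAt
    have hFic' : ContDiffAt ℝ 1 Fi ((fun t : ℝ => ((t, 0) : ℝ × EuclideanSpace ℝ (Fin M))) 0) :=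
      hFic
    exact contDiff_snd.contDiffAt.comp 0
      (ContDiffAt.comp (f := fun t : ℝ => ((t, 0) : ℝ × EuclideanSpace ℝ (Fin M))) 0 hFic' h2)
  have hφ0 : (Fi ((0 : ℝ), (0 : EuclideanSpace ℝ (Fin M)))).2 = xstar := by rw [hFia]
  obtain ⟨u, hu, hφu⟩ := hφc.contDiffOn le_rfl (by simp)
  obtain ⟨δ, hδpos, hball⟩ := Metric.mem_nhds_iff.1 (Filter.inter_mem hu hev)
  set beta0 : ℝ := δ⁻¹ + 1 with hbeta0
  have hbeta0pos : 0 < beta0 := by positivity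
  have hmem : ∀ beta : ℝ, beta > beta0 → beta⁻¹ ∈ Metric.ball (0 : ℝ) δ := by
    intro β hβ
    have hβpos : 0 < β := lt_trans hbeta0pos hβ
    have hδinv : δ⁻¹ < β := lt_of_le_of_lt (le_add_of_nonneg_right zero_le_one) hβ
    have : β⁻¹ < δ := (inv_lt_comm₀ hβpos hδpos).2 hδinv
    simpa [Real.dist_eq, abs_of_pos hβpos] using this
  refine ⟨beta0, hbeta0pos, fun beta => (Fi (beta⁻¹, 0)).2, ?_, ?_, ?_⟩
  · -- ContDiffOn
    have hinv : ContDiffOn ℝ 1 (fun beta : ℝ => beta⁻¹) (Set.Ioi beta0) :=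
      contDiffOn_id.inv fun x hx => ne_of_gt (lt_trans hbeta0pos hx)
    refine hφu.comp hinv fun β hβ => ?_
    exact (hball (hmem β hβ)).1
  · -- the critical point equation
    intro beta hbeta
    have ht := (hball (hmem beta hbeta)).2
    -- ht : G (Fi (beta⁻¹, 0)) = (beta⁻¹, 0)
    have h1 : (Fi (beta⁻¹, 0)).1 = beta⁻¹ := congrArg Prod.fst ht
    have h2 : Φ (Fi (beta⁻¹, 0)) = 0 := congrArg Prod.snd ht
    set x : EuclideanSpace ℝ (Fin M) := (Fi (beta⁻¹, 0)).2 with hx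
    have hFieq : Fi (beta⁻¹, 0) = (beta⁻¹, x) := Prod.ext h1 rfl
    rw [hFieq] at h2
    set v : EuclideanSpace ℝ (Fin M) := gradient h x with hv
    have h2' : P v + (beta⁻¹ • (v - P v) + Qc x) = 0 := by
      rw [← add_assoc]; exact h2
    have hbpos : 0 < beta := lt_trans hbeta0pos hbeta
    have hbne : beta ≠ 0 := ne_of_gt hbpos
    have hmemb : beta⁻¹ • (v - P v) + Qc x ∈ Kᗮ := by
      refine Submodule.add_mem _ (Submodule.smul_mem _ _ ?_) (hQKperp x)
      exact Submodule.sub_starProjection_mem_orthogonal (K := K) v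
    obtain ⟨hPv, hb⟩ := hsplit _ _ (K.orthogonalProjectionOnto v).2 hmemb h2'
    have hPv' : P v = 0 := hPv
    rw [hPv', sub_zero] at hb
    have h3 := congrArg (fun z => beta • z) hb
    simp only [smul_add, smul_smul, smul_zero] at h3
    rw [mul_inv_cancel₀ hbne, one_smul] at h3
    exact h3
  · -- tendsto
    have h1 : Tendsto (fun beta : ℝ => beta⁻¹) atTop (nhds (0 : ℝ)) := tendsto_inv_atTop_zero
    have h2 := hφc.continuousAt.tendsto.comp h1
    rwa [hφ0] at h2
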